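/- Completeness of JT_CS: for every constant specification CS for JT and every formula A, if A is not derivable in the Hilbert system JT_CS then there exists a Fitting model M for JT_CS and a world w in M such that M,w ⊮ A. -/

import Mathlib

namespace JustificationLogic

/-- Justification terms: constants, variables, application, sum, and proof checker `!`. -/
inductive Term : Type
  | const : ℕ → Term
  | var : ℕ → Term
  | app : Term → Term → Term
  | sum : Term → Term → Term
  | bang : Term → Term
  deriving DecidableEq

/-- Formulas of justification logic: atoms, negation, implication, and `t : A`. -/
inductive Formula : Type
  | atom : ℕ → Formula
  | neg : Formula → Formula
  | impl : Formula → Formula → Formula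
  | just : Term → Formula → Formula
  deriving DecidableEq

/-- Disjunction, defined classically: `A ∨ B := ¬A → B`. -/
def Formula.or (A B : Formula) : Formula := (Formula.neg A).impl B

/-- Falsum, defined as the negation of a propositional tautology. -/
def Formula.falsum : Formula := Formula.neg ((Formula.atom 0).impl (Formula.atom 0))

/-- Number of symbols of a term. -/
def Term.size : Term → ℕ
  | .const _ => 1
  | .var _ => 1
  | .app s t => s.size + t.size + 1
  | .sum s t => s.size + t.size + 1
  | .bang t => t.size + 1

/-- Number of symbols of a formula. -/
def Formula.size : Formula → ℕ
  | .atom _ => 1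
  | .neg A => A.size + 1
  | .impl A B => A.size + B.size + 1
  | .just t A => t.size + A.size + 1

/-- An explicit numerical code for terms (an injective Gödel numbering). -/
def Term.code : Term → ℕ
  | .const n => Nat.pair 0 n
  | .var n => Nat.pair 1 n
  | .app s t => Nat.pair 2 (Nat.pair s.code t.code)
  | .sum s t => Nat.pair 3 (Nat.pair s.code t.code)
  | .bang t => Nat.pair 4 t.code

/-- An explicit numerical code for formulas (an injective Gödel numbering). -/
def Formula.code : Formula → ℕ
  | .atom n => Nat.pair 0 n
  | .neg A => Nat.pair 1 A.code
  | .impl A B => Nat.pair 2 (Nat.pair A.code B.code)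
  | .just t A => Nat.pair 3 (Nat.pair t.code A.code)

/-- Substitution of terms for term variables. -/
def Term.subst (σ : ℕ → Term) : Term → Term
  | .const n => .const n
  | .var n => σ n
  | .app s t => .app (s.subst σ) (t.subst σ)
  | .sum s t => .sum (s.subst σ) (t.subst σ)
  | .bang t => .bang (t.subst σ)

/-- Simultaneous substitution of terms for term variables and formulas for atoms. -/
def Formula.subst (σ : ℕ → Term) (τ : ℕ → Formula) : Formula → Formula
  | .atom n => τ n
  | .neg A => .neg (A.subst σ τ)
  | .impl A B => .impl (A.subst σ τ) (B.subst σ τ)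
  | .just t A => .just (t.subst σ) (A.subst σ τ)

/-- `towerT c n = !ⁿc`. -/
def towerT (c : Term) : ℕ → Term
  | 0 => c
  | n + 1 => Term.bang (towerT c n)

/-- `towerF c A n = !ⁿ⁻¹c : ⋯ : !c : c : A` (and `A` for `n = 0`), so that
`(towerT c n) : (towerF c A n)` is the `n`-th formula produced by the rule (AN!). -/
def towerF (c : Term) (A : Formula) : ℕ → Formula
  | 0 => A
  | n + 1 => Formula.just (towerT c n) (towerF c A n)

/-- The axioms of the justification logics considered, with switches `hd`, `ht`, `h4`
for the axioms (jd), (jt), (j4).  The propositional part (A1) is given by three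
standard Hilbert-style schemes axiomatizing classical propositional logic. -/
inductive Ax (hd ht h4 : Bool) : Formula → Prop
  | k (A B : Formula) : Ax hd ht h4 (A.impl (B.impl A))
  | s (A B C : Formula) :
      Ax hd ht h4 ((A.impl (B.impl C)).impl ((A.impl B).impl (A.impl C)))
  | dn (A B : Formula) :
      Ax hd ht h4 (((A.neg).impl (B.neg)).impl (B.impl A))
  | a2 (t s : Term) (A B : Formula) :
      Ax hd ht h4 ((Formula.just t (A.impl B)).impl
        ((Formula.just s A).impl (Formula.just (Term.app t s) B)))
  | a3 (t s : Term) (A : Formula) :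
      Ax hd ht h4 (((Formula.just t A).or (Formula.just s A)).impl
        (Formula.just (Term.sum t s) A))
  | jd (t : Term) : hd = true →
      Ax hd ht h4 ((Formula.just t Formula.falsum).impl Formula.falsum)
  | jt (t : Term) (A : Formula) : ht = true →
      Ax hd ht h4 ((Formula.just t A).impl A)
  | j4 (t : Term) (A : Formula) : h4 = true →
      Ax hd ht h4 ((Formula.just t A).impl
        (Formula.just (Term.bang t) (Formula.just t A)))

/-- Axioms of the respective logics. -/
def AxJ : Formula → Prop := Ax false false false
def AxJT : Formula → Prop := Ax false true false
def AxJD : Formula → Prop := Ax true false false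
def AxJ4 : Formula → Prop := Ax false false true
def AxJD4 : Formula → Prop := Ax true false true
def AxLP : Formula → Prop := Ax false true true

/-- `CS` is a constant specification for the logic with axioms `Axm`:
every member of `CS` is of the form `c : A` with `c` a constant and `A` an axiom. -/
def ConstSpec (Axm : Formula → Prop) (CS : Set Formula) : Prop :=
  ∀ F ∈ CS, ∃ (c : ℕ) (A : Formula), F = Formula.just (Term.const c) A ∧ Axm A

/-- `CS` is axiomatically appropriate for axioms `Axm`:
for every axiom `A` there is a constant `c` with `c : A ∈ CS`. -/
def AxApprop (Axm : Formula → Prop) (CS : Set Formula) : Prop :=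
  ∀ A : Formula, Axm A → ∃ c : ℕ, Formula.just (Term.const c) A ∈ CS

/-- `CS` is schematic: the set of axioms justified by a given constant consists of
axiom schemes, i.e. it is closed under simultaneous substitution of terms for term
variables and formulas for atomic propositions. -/
def Schematic (CS : Set Formula) : Prop :=
  ∀ (c : ℕ) (A : Formula), Formula.just (Term.const c) A ∈ CS →
    ∀ (σ : ℕ → Term) (τ : ℕ → Formula),
      Formula.just (Term.const c) (A.subst σ τ) ∈ CS

/-- `CS` is decidable: some computable function decides membership in `CS`
(via the explicit Gödel numbering of formulas). -/
def DecidableCS (CS : Set Formula) : Prop :=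
  ∃ C : ℕ → Bool, Computable C ∧ ∀ F : Formula, F ∈ CS ↔ C F.code = true

/-- Hilbert-style derivability with the iterated axiom necessitation rule (AN!):
from `c : A ∈ CS` infer `!ⁿc : !ⁿ⁻¹c : ⋯ : !c : c : A` for every `n ≥ 0`. -/
inductive DerivB (Axm : Formula → Prop) (CS : Set Formula) : Formula → Prop
  | ax {A : Formula} : Axm A → DerivB Axm CS A
  | mp {A B : Formula} : DerivB Axm CS (A.impl B) → DerivB Axm CS A → DerivB Axm CS B
  | an (c : ℕ) (A : Formula) (n : ℕ) :
      Formula.just (Term.const c) A ∈ CS →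
      DerivB Axm CS (Formula.just (towerT (Term.const c) n) (towerF (Term.const c) A n))

/-- Hilbert-style derivability with the simple axiom necessitation rule (AN):
from `c : A ∈ CS` infer `c : A`. -/
inductive DerivS (Axm : Formula → Prop) (CS : Set Formula) : Formula → Prop
  | ax {A : Formula} : Axm A → DerivS Axm CS A
  | mp {A B : Formula} : DerivS Axm CS (A.impl B) → DerivS Axm CS A → DerivS Axm CS B
  | an (c : ℕ) (A : Formula) :
      Formula.just (Term.const c) A ∈ CS →
      DerivS Axm CS (Formula.just (Term.const c) A)

/-- A structure for Fitting models: a nonempty set of worlds, an accessibility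
relation, an evidence relation and a valuation. -/
structure Model : Type 1 where
  World : Type
  nonempty : Nonempty World
  R : World → World → Prop
  E : Term → Formula → World → Prop
  val : ℕ → World → Prop

/-- The satisfaction relation `M, w ⊩ A`. -/
def Sat (M : Model) : Formula → M.World → Prop
  | .atom n, w => M.val n w
  | .neg A, w => ¬ Sat M A w
  | .impl A B, w => Sat M A w → Sat M B w
  | .just t A, w => M.E t A w ∧ ∀ v : M.World, M.R w v → Sat M A v

/-- The evidence relation of a model, as a set of triples. -/
def EvSet (M : Model) : Set (Term × Formula × M.World) :=
  {x | M.E x.1 x.2.1 x.2.2}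

/-- The graph of the valuation: the set `{(w, p) | w ∈ ν(p)}`. -/
def ValSet (M : Model) : Set (M.World × ℕ) :=
  {p | M.val p.2 p.1}

/-- Seriality of a relation: every world has a successor. -/
def Serial {W : Type} (R : W → W → Prop) : Prop := ∀ w : W, ∃ v : W, R w v

/-- Admissible evidence relation for the logics without the (j4) axiom:
closure under sum and application, and the constant specification condition
with iterated `!`. -/
def AdmissibleBang (CS : Set Formula) {W : Type}
    (E : Set (Term × Formula × W)) : Prop :=
  (∀ (s t : Term) (A : Formula) (w : W),
      ((s, A, w) ∈ E ∨ (t, A, w) ∈ E) → (Term.sum s t, A, w) ∈ E) ∧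
  (∀ (s t : Term) (A B : Formula) (w : W),
      (s, A.impl B, w) ∈ E → (t, A, w) ∈ E → (Term.app s t, B, w) ∈ E) ∧
  (∀ (c : ℕ) (A : Formula) (w : W) (n : ℕ),
      Formula.just (Term.const c) A ∈ CS →
      (towerT (Term.const c) n, towerF (Term.const c) A n, w) ∈ E)

/-- Admissible evidence relation for the logics with the (j4) axiom:
closure under sum and application, the simple constant specification condition,
closure under `!`, and monotonicity along the accessibility relation. -/
def AdmissibleJ4 (CS : Set Formula) {W : Type} (R : W → W → Prop)
    (E : Set (Term × Formula × W)) : Prop :=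
  (∀ (s t : Term) (A : Formula) (w : W),
      ((s, A, w) ∈ E ∨ (t, A, w) ∈ E) → (Term.sum s t, A, w) ∈ E) ∧
  (∀ (s t : Term) (A B : Formula) (w : W),
      (s, A.impl B, w) ∈ E → (t, A, w) ∈ E → (Term.app s t, B, w) ∈ E) ∧
  (∀ (c : ℕ) (A : Formula) (w : W),
      Formula.just (Term.const c) A ∈ CS → (Term.const c, A, w) ∈ E) ∧
  (∀ (t : Term) (A : Formula) (w : W),
      (t, A, w) ∈ E → (Term.bang t, Formula.just t A, w) ∈ E) ∧
  (∀ (t : Term) (A : Formula) (w v : W),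
      (t, A, w) ∈ E → R w v → (t, A, v) ∈ E)

/-- `M` is a Fitting model for `J_CS`. -/
def IsModelJ (CS : Set Formula) (M : Model) : Prop :=
  AdmissibleBang CS (EvSet M)

/-- `M` is a Fitting model for `JT_CS`: additionally `R` is reflexive. -/
def IsModelJT (CS : Set Formula) (M : Model) : Prop :=
  Reflexive M.R ∧ AdmissibleBang CS (EvSet M)

/-- `M` is a Fitting model for `JD_CS`: additionally `R` is serial. -/
def IsModelJD (CS : Set Formula) (M : Model) : Prop :=
  Serial M.R ∧ AdmissibleBang CS (EvSet M)

/-- `M` is a Fitting model for `J4_CS`: `R` is transitive. -/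
def IsModelJ4 (CS : Set Formula) (M : Model) : Prop :=
  Transitive M.R ∧ AdmissibleJ4 CS M.R (EvSet M)

/-- `M` is a Fitting model for `JD4_CS`: `R` is serial and transitive. -/
def IsModelJD4 (CS : Set Formula) (M : Model) : Prop :=
  Serial M.R ∧ Transitive M.R ∧ AdmissibleJ4 CS M.R (EvSet M)

/-- `M` is a Fitting model for `LP_CS`: `R` is reflexive and transitive. -/
def IsModelLP (CS : Set Formula) (M : Model) : Prop :=
  Reflexive M.R ∧ Transitive M.R ∧ AdmissibleJ4 CS M.R (EvSet M)

/-- `B` is a base for the evidence relation of `M`, and that evidence relation is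
minimal (least) among the admissible ones (non-(j4) version) containing `B`. -/
def MinBaseBang (CS : Set Formula) (M : Model)
    (B : Set (Term × Formula × M.World)) : Prop :=
  B ⊆ EvSet M ∧
  ∀ E' : Set (Term × Formula × M.World),
    AdmissibleBang CS E' → B ⊆ E' → EvSet M ⊆ E'

/-- `B` is a base for the evidence relation of `M`, and that evidence relation is
minimal (least) among the admissible ones ((j4) version) containing `B`. -/
def MinBaseJ4 (CS : Set Formula) (M : Model)
    (B : Set (Term × Formula × M.World)) : Prop :=
  B ⊆ EvSet M ∧
  ∀ E' : Set (Term × Formula × M.World),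
    AdmissibleJ4 CS M.R E' → B ⊆ E' → EvSet M ⊆ E'

/-- `M` is finitary (non-(j4) version): finitely many worlds, the evidence relation
is the minimal admissible one over some finite base, and the valuation has finite graph. -/
def FinitaryBang (CS : Set Formula) (M : Model) : Prop :=
  Finite M.World ∧
  (∃ B : Set (Term × Formula × M.World), B.Finite ∧ MinBaseBang CS M B) ∧
  (ValSet M).Finite

/-- `M` is finitary ((j4) version): finitely many worlds, the evidence relation
is the minimal admissible one over some finite base, and the valuation has finite graph. -/
def FinitaryJ4 (CS : Set Formula) (M : Model) : Prop :=
  Finite M.World ∧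
  (∃ B : Set (Term × Formula × M.World), B.Finite ∧ MinBaseJ4 CS M B) ∧
  (ValSet M).Finite

/-! ### Auxiliary development for completeness -/

/-- Derivability from a set of hypotheses. -/
inductive Prov (CS : Set Formula) (Γ : Set Formula) : Formula → Prop
  | hyp {A : Formula} : A ∈ Γ → Prov CS Γ A
  | ax {A : Formula} : AxJT A → Prov CS Γ A
  | mp {A B : Formula} : Prov CS Γ (A.impl B) → Prov CS Γ A → Prov CS Γ B
  | an (c : ℕ) (A : Formula) (n : ℕ) :
      Formula.just (Term.const c) A ∈ CS →
      Prov CS Γ (Formula.just (towerT (Term.const c) n) (towerF (Term.const c) A n))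

namespace Prov

variable {CS Γ Δ : Set Formula} {A B : Formula}

theorem mono (h : Prov CS Γ A) (hs : Γ ⊆ Δ) : Prov CS Δ A := by
  induction h with
  | hyp h => exact hyp (hs h)
  | ax h => exact ax h
  | mp _ _ ih1 ih2 => exact mp ih1 ih2
  | an c A n h => exact an c A n h

theorem idthm (CS Γ : Set Formula) (A : Formula) : Prov CS Γ (A.impl A) :=
  ((ax (Ax.s A (A.impl A) A)).mp (ax (Ax.k A (A.impl A)))).mp (ax (Ax.k A A))

theorem deduction (h : Prov CS (insert A Γ) B) : Prov CS Γ (A.impl B) := by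
  induction h with
  | @hyp C h =>
    rcases h with rfl | h
    · exact idthm CS Γ C
    · exact (ax (Ax.k C A)).mp (hyp h)
  | @ax C h => exact (Prov.ax (Ax.k C A)).mp (Prov.ax h)
  | @mp C D _ _ ih1 ih2 => exact ((Prov.ax (Ax.s A C D)).mp ih1).mp ih2
  | an c C n h => exact (Prov.ax (Ax.k _ A)).mp (an c C n h)

theorem dne (h : Prov CS Γ A.neg.neg) : Prov CS Γ A := by
  have s3 : Prov CS Γ ((A.neg.neg.neg.neg).impl A.neg.neg) :=
    (ax (Ax.k A.neg.neg A.neg.neg.neg.neg)).mp h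
  have s5 : Prov CS Γ (A.neg.impl A.neg.neg.neg) :=
    (ax (Ax.dn A.neg.neg.neg A.neg)).mp s3
  exact ((ax (Ax.dn A A.neg.neg)).mp s5).mp h

theorem dne_thm (CS Γ : Set Formula) (A : Formula) : Prov CS Γ ((A.neg.neg).impl A) :=
  deduction (dne (hyp (Set.mem_insert _ _)))

theorem dni (h : Prov CS Γ A) : Prov CS Γ A.neg.neg :=
  ((ax (Ax.dn A.neg.neg A)).mp (dne_thm CS Γ A.neg)).mp h

/-- From `¬A` infer `A → B`. -/
theorem exfalso_neg (h : Prov CS Γ A.neg) (B : Formula) : Prov CS Γ (A.impl B) :=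
  (ax (Ax.dn B A)).mp ((ax (Ax.k A.neg B.neg)).mp h)

theorem of_pair (h1 : Prov CS Γ A) (h2 : Prov CS Γ A.neg) : Prov CS Γ Formula.falsum :=
  (exfalso_neg h2 Formula.falsum).mp h1

theorem neg_of_impl_falsum (h : Prov CS Γ (A.impl Formula.falsum)) : Prov CS Γ A.neg := by
  have h1 : Prov CS Γ (A.neg.neg.impl Formula.falsum) :=
    deduction ((mono h (Set.subset_insert _ _)).mp (dne (hyp (Set.mem_insert _ _))))
  have h2 : Prov CS Γ (((Formula.atom 0).impl (Formula.atom 0)).impl A.neg) :=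
    (ax (Ax.dn A.neg ((Formula.atom 0).impl (Formula.atom 0)))).mp h1
  exact h2.mp (idthm CS Γ (Formula.atom 0))

/-- From `A` infer `¬A → B` (i.e. the defined disjunction introduction). -/
theorem or_intro_left (h : Prov CS Γ A) (B : Formula) : Prov CS Γ (A.neg.impl B) :=
  deduction ((exfalso_neg (hyp (Set.mem_insert _ _)) B).mp (mono h (Set.subset_insert _ _)))

theorem finite_support (h : Prov CS Γ A) :
    ∃ Γ₀ : Set Formula, Γ₀ ⊆ Γ ∧ Γ₀.Finite ∧ Prov CS Γ₀ A := by
  induction h with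
  | @hyp C h =>
    exact ⟨{C}, Set.singleton_subset_iff.2 h, Set.finite_singleton C, hyp rfl⟩
  | @ax C h => exact ⟨∅, Set.empty_subset _, Set.finite_empty, ax h⟩
  | @mp C D _ _ ih1 ih2 =>
    obtain ⟨G1, hs1, hf1, hp1⟩ := ih1
    obtain ⟨G2, hs2, hf2, hp2⟩ := ih2
    exact ⟨G1 ∪ G2, Set.union_subset hs1 hs2, hf1.union hf2,
      (mono hp1 Set.subset_union_left).mp (mono hp2 Set.subset_union_right)⟩
  | an c C n h => exact ⟨∅, Set.empty_subset _, Set.finite_empty, an c C n h⟩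

end Prov

/-- Consistency. -/
def Con (CS Γ : Set Formula) : Prop := ¬ Prov CS Γ Formula.falsum

/-- Maximal consistent sets. -/
def MCS (CS Γ : Set Formula) : Prop :=
  Con CS Γ ∧ ∀ Δ : Set Formula, Con CS Δ → Γ ⊆ Δ → Δ = Γ

theorem mcs_closed {CS Γ : Set Formula} (h : MCS CS Γ) {A : Formula}
    (hp : Prov CS Γ A) : A ∈ Γ := by
  have hcon : Con CS (insert A Γ) := by
    intro hf
    exact h.1 ((Prov.deduction hf).mp hp)
  have := h.2 (insert A Γ) hcon (Set.subset_insert _ _)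
  rw [← this]; exact Set.mem_insert _ _

theorem mcs_neg {CS Γ : Set Formula} (h : MCS CS Γ) (A : Formula) :
    A.neg ∈ Γ ↔ A ∉ Γ := by
  constructor
  · intro hn hA
    exact h.1 (Prov.of_pair (Prov.hyp hA) (Prov.hyp hn))
  · intro hA
    have hincon : ¬ Con CS (insert A Γ) := by
      intro hcon
      have := h.2 (insert A Γ) hcon (Set.subset_insert _ _)
      exact hA (this ▸ Set.mem_insert _ _)
    have hp : Prov CS (insert A Γ) Formula.falsum := not_not.mp hincon
    exact mcs_closed h (Prov.neg_of_impl_falsum (Prov.deduction hp))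

theorem mcs_impl {CS Γ : Set Formula} (h : MCS CS Γ) (A B : Formula) :
    A.impl B ∈ Γ ↔ (A ∈ Γ → B ∈ Γ) := by
  constructor
  · intro hi hA
    exact mcs_closed h ((Prov.hyp hi).mp (Prov.hyp hA))
  · intro hi
    by_cases hA : A ∈ Γ
    · exact mcs_closed h ((Prov.ax (Ax.k B A)).mp (Prov.hyp (hi hA)))
    · exact mcs_closed h (Prov.exfalso_neg (Prov.hyp ((mcs_neg h A).2 hA)) B)

/-- A finite subset of the union of a nonempty chain is contained in one member. -/
theorem chain_bound {c : Set (Set Formula)} (hc : IsChain (· ⊆ ·) c)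
    (hne : c.Nonempty) {Γ₀ : Set Formula} (hfin : Γ₀.Finite) (hsub : Γ₀ ⊆ ⋃₀ c) :
    ∃ m ∈ c, Γ₀ ⊆ m := by
  refine Set.Finite.induction_on (motive := fun s _ => s ⊆ ⋃₀ c → ∃ m ∈ c, s ⊆ m) Γ₀ hfin
    (fun _ => ⟨hne.choose, hne.choose_spec, Set.empty_subset _⟩) (@fun a s => ?_) hsub
  intro _ _ ih hsub'
  obtain ⟨m, hm, hms⟩ := ih ((Set.subset_insert a s).trans hsub')
  obtain ⟨m', hm', ha⟩ := hsub' (Set.mem_insert a s)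
  rcases eq_or_ne m m' with rfl | hne'
  · exact ⟨m, hm, Set.insert_subset ha hms⟩
  rcases hc hm hm' hne' with h1 | h1
  · exact ⟨m', hm', Set.insert_subset ha (hms.trans h1)⟩
  · exact ⟨m, hm, Set.insert_subset (h1 ha) hms⟩

theorem lindenbaum {CS Γ : Set Formula} (h : Con CS Γ) :
    ∃ Δ : Set Formula, Γ ⊆ Δ ∧ MCS CS Δ := by
  obtain ⟨m, hm, hmax⟩ := zorn_subset_nonempty {Δ : Set Formula | Con CS Δ}
    (fun c hcS hchain hcne => by
      refine ⟨⋃₀ c, ?_, fun s hs => Set.subset_sUnion_of_mem hs⟩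
      intro hf
      obtain ⟨Γ₀, hsub, hfin, hp⟩ := Prov.finite_support hf
      obtain ⟨m, hmc, hm⟩ := chain_bound hchain hcne hfin hsub
      exact hcS hmc (Prov.mono hp hm)) Γ h
  refine ⟨m, hm, hmax.1, fun Δ hΔ hsub => ?_⟩
  exact Set.Subset.antisymm (hmax.2 hΔ hsub) hsub

/-- Worlds of the canonical model. -/
def CanW (CS : Set Formula) : Type := {Γ : Set Formula // MCS CS Γ}

/-- The canonical model. -/
def canModel (CS : Set Formula) (h : Nonempty (CanW CS)) : Model where
  World := CanW CS
  nonempty := h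
  R := fun Γ Δ => ∀ (t : Term) (B : Formula), Formula.just t B ∈ Γ.1 → B ∈ Δ.1
  E := fun t B Γ => Formula.just t B ∈ Γ.1
  val := fun n Γ => Formula.atom n ∈ Γ.1

theorem truth_lemma (CS : Set Formula) (h : Nonempty (CanW CS)) :
    ∀ (A : Formula) (Γ : (canModel CS h).World), Sat (canModel CS h) A Γ ↔ A ∈ Γ.1 := by
  intro A
  induction A with
  | atom n => intro Γ; exact Iff.rfl
  | neg B ih =>
    intro Γ
    show (¬ Sat (canModel CS h) B Γ) ↔ _
    rw [ih Γ]
    exact (mcs_neg Γ.2 B).symm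
  | impl B C ih1 ih2 =>
    intro Γ
    show (Sat _ B Γ → Sat _ C Γ) ↔ _
    rw [ih1 Γ, ih2 Γ, mcs_impl Γ.2 B C]
  | just t B ih =>
    intro Γ
    constructor
    · intro hs; exact hs.1
    · intro hm
      exact ⟨hm, fun Δ hR => (ih Δ).2 (hR t B hm)⟩

/-- Completeness of `JT_CS`: if a formula is not derivable in the Hilbert system
`JT_CS` (with constant specification `CS`), then it fails at some world
of some Fitting model for `JT_CS`. -/
theorem completeness_JT (CS : Set Formula) (hCS : ConstSpec AxJT CS) (A : Formula)
    (hA : ¬ DerivB AxJT CS A) :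
    ∃ M : Model, IsModelJT CS M ∧ ∃ w : M.World, ¬ Sat M A w := by
  -- `{¬A}` is consistent
  have hprov : ∀ B : Formula, Prov CS ∅ B → DerivB AxJT CS B := by
    intro B hB
    induction hB with
    | hyp h => exact absurd h (Set.notMem_empty _)
    | ax h => exact DerivB.ax h
    | mp _ _ ih1 ih2 => exact DerivB.mp ih1 ih2
    | an c C n h => exact DerivB.an c C n h
  have hcon : Con CS (insert A.neg ∅) := by
    intro hf
    exact hA (hprov A (Prov.dne (Prov.neg_of_impl_falsum (Prov.deduction hf))))
  obtain ⟨Δ, hsub, hΔ⟩ := lindenbaum hcon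
  have hne : Nonempty (CanW CS) := ⟨⟨Δ, hΔ⟩⟩
  refine ⟨canModel CS hne, ⟨?_, ?_, ?_, ?_⟩, ⟨Δ, hΔ⟩, ?_⟩
  · -- reflexive
    intro Γ t B hm
    exact mcs_closed Γ.2 ((Prov.ax (Ax.jt t B rfl)).mp (Prov.hyp hm))
  · -- sum
    intro s t B w hst
    have hor : Prov CS w.1 ((Formula.just s B).or (Formula.just t B)) := by
      rcases hst with h | h
      · exact Prov.or_intro_left (Prov.hyp h) _
      · exact (Prov.ax (Ax.k _ (Formula.just s B).neg)).mp (Prov.hyp h)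
    exact mcs_closed w.2 ((Prov.ax (Ax.a3 s t B)).mp hor)
  · -- app
    intro s t B C w h1 h2
    exact mcs_closed w.2 (((Prov.ax (Ax.a2 s t B C)).mp (Prov.hyp h1)).mp (Prov.hyp h2))
  · -- constants
    intro c B w n hc
    exact mcs_closed w.2 (Prov.an c B n hc)
  · -- refutation
    intro hs
    have hmem : A ∈ Δ := (truth_lemma CS hne A ⟨Δ, hΔ⟩).1 hs
    exact ((mcs_neg hΔ A).1 (hsub (Set.mem_insert _ _))) hmem

end JustificationLogic
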